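/- For every positive integer n and every permutation σ in the symmetric group S_n, the number of disjoint cycles of σ plus the number of disjoint cycles of στ is at most n+1, i.e. ξ(σ) + ξ(στ) ≤ n + 1. -/

import Mathlib

/-- The number of disjoint cycles of a permutation, counting fixed points
(i.e. the number of orbits). -/
def cycleCount {β : Type*} [Fintype β] [DecidableEq β] (σ : Equiv.Perm β) : ℕ :=
  σ.cycleType.card + (Finset.univ.filter fun x => σ x = x).card

namespace CycleLemmaAux

open Equiv Equiv.Perm Finset

variable {α : Type*} [Fintype α] [DecidableEq α]

/-- The setoid of the `SameCycle` relation. -/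
def scSetoid (σ : Equiv.Perm α) : Setoid α :=
  ⟨σ.SameCycle, ⟨fun _ => Equiv.Perm.SameCycle.refl σ _, fun h => h.symm, fun h₁ h₂ => h₁.trans h₂⟩⟩

instance scDec (σ : Equiv.Perm α) : DecidableRel (scSetoid σ).r :=
  fun a b => (inferInstance : Decidable (σ.SameCycle a b))

instance quotFintype (σ : Equiv.Perm α) : Fintype (Quotient (scSetoid σ)) :=
  @Quotient.fintype α _ (scSetoid σ) (scDec σ)

/-- The number of orbits of a permutation. -/
def permN (σ : Equiv.Perm α) : ℕ := Fintype.card (Quotient (scSetoid σ))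

omit [Fintype α] [DecidableEq α] in
lemma eq_of_sameCycle_fixed {σ : Equiv.Perm α} {a b : α} (h : σ a = a)
    (hs : σ.SameCycle a b) : a = b := by
  obtain ⟨i, hi⟩ := hs
  rw [← hi, zpow_apply_eq_self_of_apply_eq_self h]

lemma cycleCount_eq_permN (σ : Equiv.Perm α) : cycleCount σ = permN σ := by
  classical
  set f : α → (σ.cycleFactorsFinset ⊕ {x // σ x = x}) :=
    fun a => if h : σ a = a then Sum.inr ⟨a, h⟩
      else Sum.inl ⟨σ.cycleOf a,
        Equiv.Perm.cycleOf_mem_cycleFactorsFinset_iff.2 (mem_support.2 h)⟩ with hfdef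
  have hf : ∀ a b : α, (scSetoid σ).r a b → f a = f b := by
    intro a b hab
    by_cases ha : σ a = a
    · obtain rfl := eq_of_sameCycle_fixed ha hab
      rfl
    · by_cases hb : σ b = b
      · exact absurd (eq_of_sameCycle_fixed hb hab.symm) (fun h => ha (h ▸ hb))
      · simp only [hfdef, dif_neg ha, dif_neg hb]
        exact congrArg _ (Subtype.ext (Equiv.Perm.SameCycle.cycleOf_eq hab))
  have hbij : Function.Bijective (Quotient.lift f hf) := by
    constructor
    · intro q1 q2
      refine Quotient.inductionOn₂ q1 q2 fun a b hab => ?_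
      replace hab : f a = f b := hab
      by_cases ha : σ a = a
      · by_cases hb : σ b = b
        · simp only [hfdef, dif_pos ha, dif_pos hb, Sum.inr.injEq, Subtype.mk.injEq] at hab
          exact congrArg _ hab
        · simp only [hfdef, dif_pos ha, dif_neg hb] at hab
          exact absurd hab (by simp)
      · by_cases hb : σ b = b
        · simp only [hfdef, dif_neg ha, dif_pos hb] at hab
          exact absurd hab (by simp)
        · simp only [hfdef, dif_neg ha, dif_neg hb, Sum.inl.injEq, Subtype.mk.injEq] at hab
          refine Quotient.sound ?_
          have hmem : b ∈ (σ.cycleOf a).support := by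
            rw [hab, Equiv.Perm.mem_support_cycleOf_iff]
            exact ⟨Equiv.Perm.SameCycle.refl σ b, mem_support.2 hb⟩
          exact (Equiv.Perm.mem_support_cycleOf_iff.1 hmem).1
    · rintro (⟨c, hc⟩ | ⟨a, ha⟩)
      · obtain ⟨hc1, hc2⟩ := (Equiv.Perm.mem_cycleFactorsFinset_iff).1 hc
        obtain ⟨x, hx, -⟩ := hc1
        have hxs : x ∈ c.support := mem_support.2 hx
        have hσx : σ x ≠ x := by rw [← hc2 x hxs]; exact hx
        refine ⟨⟦x⟧, ?_⟩
        show f x = _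
        simp only [hfdef, dif_neg hσx]
        exact congrArg _ (Subtype.ext (Equiv.Perm.cycle_is_cycleOf hxs hc).symm)
      · exact ⟨⟦a⟧, show f a = _ by simp only [hfdef, dif_pos ha]⟩
  have hcard := Fintype.card_of_bijective hbij
  rw [permN, hcard, Fintype.card_sum, Fintype.card_coe, Fintype.card_subtype, cycleCount]
  congr 1
  rw [Equiv.Perm.cycleType, Multiset.card_map]
  rfl

omit [Fintype α] [DecidableEq α] in
/-- step a reflexive-transitive relation along powers of a permutation -/
lemma rel_pow {r : α → α → Prop} (hrefl : Reflexive r) (htrans : Transitive r)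
    (π : Equiv.Perm α) (h : ∀ c, r c (π c)) : ∀ (k : ℕ) (a : α), r a ((π ^ k) a) := by
  intro k
  induction k with
  | zero => intro a; simpa using hrefl a
  | succ k ih =>
    intro a
    have : (π ^ (k + 1)) a = π ((π ^ k) a) := by
      rw [pow_succ']; rfl
    rw [this]
    exact htrans (ih a) (h _)

/-- The join relation of `SameCycle σ` with the pair `{x, y}`. -/
def jrel (σ : Equiv.Perm α) (x y : α) (a b : α) : Prop :=
  σ.SameCycle a b ∨ (σ.SameCycle a x ∧ σ.SameCycle y b) ∨ (σ.SameCycle a y ∧ σ.SameCycle x b)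

omit [Fintype α] [DecidableEq α] in
lemma jrel_refl (σ : Equiv.Perm α) (x y a : α) : jrel σ x y a a := Or.inl (SameCycle.refl σ a)

omit [Fintype α] [DecidableEq α] in
lemma jrel_symm {σ : Equiv.Perm α} {x y a b : α} (h : jrel σ x y a b) : jrel σ x y b a := by
  rcases h with h | ⟨h1, h2⟩ | ⟨h1, h2⟩
  · exact Or.inl h.symm
  · exact Or.inr (Or.inr ⟨h2.symm, h1.symm⟩)
  · exact Or.inr (Or.inl ⟨h2.symm, h1.symm⟩)

omit [Fintype α] [DecidableEq α] in
lemma jrel_trans {σ : Equiv.Perm α} {x y a b c : α} (hab : jrel σ x y a b)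
    (hbc : jrel σ x y b c) : jrel σ x y a c := by
  rcases hab with h | ⟨h1, h2⟩ | ⟨h1, h2⟩ <;> rcases hbc with g | ⟨g1, g2⟩ | ⟨g1, g2⟩
  · exact Or.inl (h.trans g)
  · exact Or.inr (Or.inl ⟨h.trans g1, g2⟩)
  · exact Or.inr (Or.inr ⟨h.trans g1, g2⟩)
  · exact Or.inr (Or.inl ⟨h1, h2.trans g⟩)
  · exact Or.inl (h1.trans ((h2.trans g1).symm.trans g2))
  · exact Or.inl (h1.trans g2)
  · exact Or.inr (Or.inr ⟨h1, h2.trans g⟩)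
  · exact Or.inl (h1.trans g2)
  · exact Or.inl (h1.trans ((h2.trans g1).symm.trans g2))

def jSetoid (σ : Equiv.Perm α) (x y : α) : Setoid α :=
  ⟨jrel σ x y, ⟨jrel_refl σ x y, jrel_symm, fun h1 h2 => jrel_trans h1 h2⟩⟩

instance jDec (σ : Equiv.Perm α) (x y : α) : DecidableRel (jSetoid σ x y).r :=
  fun _ _ => (inferInstance : Decidable (_ ∨ _))

instance jQuotFintype (σ : Equiv.Perm α) (x y : α) : Fintype (Quotient (jSetoid σ x y)) :=
  @Quotient.fintype α _ (jSetoid σ x y) (jDec σ x y)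

/-- one-step: the join relation absorbs multiplication by `swap x y`. -/
lemma sameCycle_imp_jrel_swap (σ : Equiv.Perm α) (x y : α) {a b : α}
    (h : σ.SameCycle a b) : jrel (Equiv.swap x y * σ) x y a b := by
  set σ' := Equiv.swap x y * σ with hσ'
  have hstep : ∀ c, jrel σ' x y c (σ c) := by
    intro c
    have hc : σ c = Equiv.swap x y (σ' c) := by
      have h0 : σ' c = Equiv.swap x y (σ c) := rfl
      rw [h0, Equiv.swap_apply_self]
    have hcσ' : σ'.SameCycle c (σ' c) := ⟨1, by simp⟩
    by_cases h1 : σ' c = x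
    · rw [hc, h1, Equiv.swap_apply_left]
      exact Or.inr (Or.inl ⟨by rw [← h1]; exact hcσ', Equiv.Perm.SameCycle.refl σ' y⟩)
    · by_cases h2 : σ' c = y
      · rw [hc, h2, Equiv.swap_apply_right]
        exact Or.inr (Or.inr ⟨by rw [← h2]; exact hcσ', Equiv.Perm.SameCycle.refl σ' x⟩)
      · rw [hc, Equiv.swap_apply_of_ne_of_ne h1 h2]
        exact Or.inl hcσ'
  obtain ⟨k, -, -, hk⟩ := h.exists_pow_eq''
  rw [← hk]
  exact rel_pow (jrel_refl σ' x y) (fun {_ _ _} h g => jrel_trans h g) σ hstep k a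

lemma jrel_swap_mul (σ : Equiv.Perm α) (x y : α) {a b : α} (h : jrel σ x y a b) :
    jrel (Equiv.swap x y * σ) x y a b := by
  set σ' := Equiv.swap x y * σ
  have hxy : jrel σ' x y x y :=
    Or.inr (Or.inl ⟨Equiv.Perm.SameCycle.refl σ' x, Equiv.Perm.SameCycle.refl σ' y⟩)
  rcases h with h | ⟨h1, h2⟩ | ⟨h1, h2⟩
  · exact sameCycle_imp_jrel_swap σ x y h
  · exact jrel_trans (jrel_trans (sameCycle_imp_jrel_swap σ x y h1) hxy)
      (sameCycle_imp_jrel_swap σ x y h2)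
  · exact jrel_trans (jrel_trans (sameCycle_imp_jrel_swap σ x y h1) (jrel_symm hxy))
      (sameCycle_imp_jrel_swap σ x y h2)

lemma jrel_swap_mul_iff (σ : Equiv.Perm α) (x y : α) (a b : α) :
    jrel (Equiv.swap x y * σ) x y a b ↔ jrel σ x y a b := by
  constructor
  · intro h
    have := jrel_swap_mul (Equiv.swap x y * σ) x y h
    rwa [← mul_assoc, Equiv.swap_mul_self, one_mul] at this
  · exact jrel_swap_mul σ x y

omit [DecidableEq α] in
/-- If one setoid's relation implies another's, quotient cards compare. -/
lemma card_quot_le (s t : Setoid α) [DecidableRel s.r] [DecidableRel t.r]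
    (h : ∀ a b, s.r a b → t.r a b) :
    @Fintype.card (Quotient t) (@Quotient.fintype α _ t ‹_›) ≤
      @Fintype.card (Quotient s) (@Quotient.fintype α _ s ‹_›) := by
  apply Fintype.card_le_of_surjective (Quotient.lift (fun a => (⟦a⟧ : Quotient t))
    (fun a b hab => Quotient.sound (h a b hab)))
  rintro ⟨a⟩
  exact ⟨⟦a⟧, rfl⟩

/-- Key inequality: multiplying by a transposition decreases the orbit count by at most 1. -/
lemma permN_le_swap_mul (σ : Equiv.Perm α) (x y : α) :
    permN σ ≤ permN (Equiv.swap x y * σ) + 1 := by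
  classical
  have h1 : permN σ ≤ Fintype.card (Quotient (jSetoid σ x y)) + 1 := by
    set ψ : Quotient (scSetoid σ) → (Quotient (jSetoid σ x y)) ⊕ Unit :=
      Quotient.lift (fun a => if σ.SameCycle a x then Sum.inr ()
        else Sum.inl (⟦a⟧ : Quotient (jSetoid σ x y)))
        (by
          intro a b hab
          show (if σ.SameCycle a x then Sum.inr () else Sum.inl (⟦a⟧ : Quotient (jSetoid σ x y))) =
            (if σ.SameCycle b x then Sum.inr () else Sum.inl (⟦b⟧ : Quotient (jSetoid σ x y)))
          by_cases h : σ.SameCycle a x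
          · rw [if_pos h, if_pos ((Equiv.Perm.SameCycle.symm hab).trans h)]
          · rw [if_neg h, if_neg (fun hb => h (SameCycle.trans hab hb))]
            exact congrArg _ (Quotient.sound (Or.inl hab))) with hψ
    have hinj : Function.Injective ψ := by
      intro q1 q2
      refine Quotient.inductionOn₂ q1 q2 fun a b hab => ?_
      replace hab : (if σ.SameCycle a x then Sum.inr ()
          else Sum.inl (⟦a⟧ : Quotient (jSetoid σ x y))) =
          (if σ.SameCycle b x then Sum.inr ()
          else Sum.inl (⟦b⟧ : Quotient (jSetoid σ x y))) := hab
      by_cases ha : σ.SameCycle a x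
      · by_cases hb : σ.SameCycle b x
        · exact Quotient.sound (ha.trans hb.symm)
        · rw [if_pos ha, if_neg hb] at hab; exact absurd hab (by simp)
      · by_cases hb : σ.SameCycle b x
        · rw [if_neg ha, if_pos hb] at hab; exact absurd hab (by simp)
        · rw [if_neg ha, if_neg hb] at hab
          have hj : jrel σ x y a b := Quotient.exact (Sum.inl.inj hab)
          rcases hj with h | ⟨g1, g2⟩ | ⟨g1, g2⟩
          · exact Quotient.sound h
          · exact absurd g1 ha
          · exact absurd g2.symm hb
    have := Fintype.card_le_of_injective ψ hinj
    simp at this; unfold permN; convert this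
  have h2 : Fintype.card (Quotient (jSetoid σ x y)) ≤ permN (Equiv.swap x y * σ) := by
    have := card_quot_le (scSetoid (Equiv.swap x y * σ)) (jSetoid σ x y)
      (fun a b hab => (jrel_swap_mul_iff σ x y a b).1 (Or.inl hab))
    exact this.trans_eq rfl
  omega

/-- Splitting lemma: multiplication by `swap x (σ x)` at a non-fixed point `x`
increases the orbit count by exactly 1. -/
lemma permN_swap_mul_eq {σ : Equiv.Perm α} {x : α} (hx : σ x ≠ x) :
    permN (Equiv.swap x (σ x) * σ) = permN σ + 1 := by
  classical
  set σ' := Equiv.swap x (σ x) * σ with hσ'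
  have hback : Equiv.swap x (σ x) * σ' = σ := by
    rw [hσ', ← mul_assoc, Equiv.swap_mul_self, one_mul]
  have hle : permN σ' ≤ permN σ + 1 := by
    have := permN_le_swap_mul σ' x (σ x)
    rwa [hback] at this
  have hsub : ∀ a b : α, σ'.SameCycle a b → σ.SameCycle a b := by
    have hstep : ∀ c, σ.SameCycle c (σ' c) := by
      intro c
      have h0 : σ' c = Equiv.swap x (σ x) (σ c) := rfl
      by_cases h1 : σ c = x
      · have : σ' c = σ x := by rw [h0, h1, Equiv.swap_apply_left]
        rw [this]
        exact ⟨2, by rw [zpow_two]; simp [Equiv.Perm.mul_apply, h1]⟩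
      · by_cases h2 : σ c = σ x
        · have hcx : c = x := σ.injective h2
          have : σ' c = c := by rw [h0, h2, Equiv.swap_apply_right, hcx]
          rw [this]
        · have : σ' c = σ c := by rw [h0, Equiv.swap_apply_of_ne_of_ne h1 h2]
          rw [this]
          exact ⟨1, by simp⟩
    intro a b hab
    obtain ⟨k, -, -, hk⟩ := hab.exists_pow_eq''
    rw [← hk]
    exact rel_pow (fun c => Equiv.Perm.SameCycle.refl σ c)
      (fun {_ _ _} h g => h.trans g) σ' hstep k a
  have hxfix : σ' x = x := by
    have : σ' x = Equiv.swap x (σ x) (σ x) := rfl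
    rw [this, Equiv.swap_apply_right]
  have hlt : permN σ < permN σ' := by
    set F : Quotient (scSetoid σ') → Quotient (scSetoid σ) :=
      Quotient.lift (fun a => (⟦a⟧ : Quotient (scSetoid σ)))
        (fun a b hab => Quotient.sound (hsub a b hab)) with hF
    have hsurj : Function.Surjective F := by
      rintro ⟨a⟩
      exact ⟨⟦a⟧, rfl⟩
    have hninj : ¬ Function.Injective F := by
      intro hinj
      have h1 : F ⟦x⟧ = F ⟦σ x⟧ := Quotient.sound ⟨1, by simp⟩
      have h2 := hinj h1
      have h3 : σ'.SameCycle x (σ x) := Quotient.exact h2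
      exact hx (eq_of_sameCycle_fixed hxfix h3).symm
    exact Fintype.card_lt_of_surjective_not_injective F hsurj hninj
  omega

lemma permN_one : permN (1 : Equiv.Perm α) = Fintype.card α := by
  classical
  have hbij : Function.Bijective (Quotient.lift (fun a => a)
      (fun a b (hab : (1 : Equiv.Perm α).SameCycle a b) =>
        Equiv.Perm.sameCycle_one.1 hab) : Quotient (scSetoid (1 : Equiv.Perm α)) → α) := by
    constructor
    · intro q1 q2
      refine Quotient.inductionOn₂ q1 q2 fun a b hab => ?_
      exact Quotient.sound (Equiv.Perm.sameCycle_one.2 hab)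
    · exact fun a => ⟨⟦a⟧, rfl⟩
  exact Fintype.card_of_bijective hbij

/-- Every permutation is the product of `card α - permN σ` transpositions. -/
lemma exists_swap_list (σ : Equiv.Perm α) :
    ∃ l : List (Equiv.Perm α), (∀ g ∈ l, g.IsSwap) ∧ l.prod = σ ∧
      l.length + permN σ = Fintype.card α := by
  classical
  generalize hk : σ.support.card = k
  induction k using Nat.strong_induction_on generalizing σ with
  | _ k ih =>
    rcases Nat.eq_zero_or_pos k with rfl | hkpos
    · have : σ.support = ∅ := Finset.card_eq_zero.1 hk
      obtain rfl : σ = 1 := Equiv.Perm.support_eq_empty_iff.1 this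
      exact ⟨[], by simp, by simp, by simp [permN_one]⟩
    · have hne : σ.support.Nonempty := Finset.card_pos.1 (hk ▸ hkpos)
      obtain ⟨x, hxmem⟩ := hne
      have hx : σ x ≠ x := Equiv.Perm.mem_support.1 hxmem
      set σ' := Equiv.swap x (σ x) * σ with hσ'
      have hcard : σ'.support.card < k := hk ▸ Equiv.Perm.card_support_swap_mul hx
      obtain ⟨l', hl'sw, hl'prod, hl'len⟩ := ih σ'.support.card hcard σ' rfl
      refine ⟨Equiv.swap x (σ x) :: l', ?_, ?_, ?_⟩
      · intro g hg
        rcases List.mem_cons.1 hg with rfl | hg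
        · exact ⟨x, σ x, Ne.symm hx, rfl⟩
        · exact hl'sw g hg
      · rw [List.prod_cons, hl'prod, hσ', ← mul_assoc, Equiv.swap_mul_self, one_mul]
      · have hsplit : permN σ' = permN σ + 1 := permN_swap_mul_eq hx
        simp only [List.length_cons]
        omega

lemma permN_le_list_prod_mul (l : List (Equiv.Perm α)) (hl : ∀ g ∈ l, g.IsSwap)
    (β : Equiv.Perm α) : permN β ≤ permN (l.prod * β) + l.length := by
  induction l generalizing β with
  | nil => simp
  | cons t l ih =>
    obtain ⟨x, y, -, rfl⟩ := hl t List.mem_cons_self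
    have h1 := ih (fun g hg => hl g (List.mem_cons_of_mem _ hg)) β
    have h2 := permN_le_swap_mul (l.prod * β) x y
    rw [List.prod_cons, mul_assoc, List.length_cons]
    omega

omit [Fintype α] in
lemma swap_list_reverse_prod (l : List (Equiv.Perm α)) (hl : ∀ g ∈ l, g.IsSwap) :
    l.reverse.prod = l.prod⁻¹ := by
  induction l with
  | nil => simp
  | cons t l ih =>
    obtain ⟨x, y, -, rfl⟩ := hl t List.mem_cons_self
    rw [List.reverse_cons, List.prod_append, ih (fun g hg => hl g (List.mem_cons_of_mem _ hg)),
      List.prod_cons, List.prod_cons, List.prod_nil, mul_one, mul_inv_rev, Equiv.swap_inv]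

end CycleLemmaAux

/-- **Cycle Lemma.** For every positive integer `n` and every permutation `σ ∈ S_n`,
`ξ(σ) + ξ(στ) ≤ n + 1`, where `τ = (1 2 ⋯ n)` is the canonical full cycle. -/
theorem cycle_lemma (n : ℕ) (hn : 0 < n) (σ : Equiv.Perm (Fin n)) :
    cycleCount σ + cycleCount (σ * finRotate n) ≤ n + 1 := by
  classical
  open CycleLemmaAux in
  have hτ : cycleCount (finRotate n) = 1 := by
    rcases Nat.lt_or_ge n 2 with h2 | h2
    · interval_cases n
      · have h1 : finRotate 1 = 1 := Subsingleton.elim _ _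
        rw [h1]
        simp [cycleCount, Equiv.Perm.cycleType_one]
    · unfold cycleCount
      rw [cycleType_finRotate_of_le h2]
      have hsupp : (finRotate n).support = Finset.univ := support_finRotate_of_le h2
      have hfil : (Finset.univ.filter fun x => (finRotate n) x = x) = ∅ := by
        rw [Finset.filter_eq_empty_iff]
        intro x _
        have : x ∈ (finRotate n).support := hsupp ▸ Finset.mem_univ x
        exact Equiv.Perm.mem_support.1 this
      rw [hfil]; simp
  obtain ⟨l, hsw, hprod, hlen⟩ := CycleLemmaAux.exists_swap_list σ
  have hrevsw : ∀ g ∈ l.reverse, g.IsSwap := fun g hg => hsw g (List.mem_reverse.1 hg)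
  have hrevprod : l.reverse.prod = σ⁻¹ := by
    rw [CycleLemmaAux.swap_list_reverse_prod l hsw, hprod]
  have hA := CycleLemmaAux.permN_le_list_prod_mul l.reverse hrevsw (σ * finRotate n)
  rw [hrevprod, List.length_reverse, inv_mul_cancel_left] at hA
  have hτ' : CycleLemmaAux.permN (finRotate n) = 1 := by
    rw [← CycleLemmaAux.cycleCount_eq_permN, hτ]
  rw [CycleLemmaAux.cycleCount_eq_permN, CycleLemmaAux.cycleCount_eq_permN]
  rw [Fintype.card_fin] at hlen
  omega
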